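/- For a unit-speed spherical curve ξ with geodesic curvature κ(s) = det(ξ, ξ', ξ'') and spherical angular momentum K(s) = x'y − xy', one has K'(s) = κ(s)·z'(s), where z is the third coordinate of ξ. -/

import Mathlib

open Real

private lemma contDiff_two_diff (f : ℝ → ℝ) (hf : ContDiff ℝ 2 f) :
    Differentiable ℝ f ∧ Differentiable ℝ (deriv f) := by
  have hf' : ContDiff ℝ ((1 : WithTop ℕ∞) + 1) f := by
    exact_mod_cast hf
  rw [contDiff_succ_iff_deriv] at hf'
  exact ⟨hf'.1, hf'.2.2.differentiable one_ne_zero⟩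

/-- For a unit-speed spherical curve ξ = (x,y,z) with geodesic curvature
κ(s) = det(ξ, ξ', ξ'') and spherical angular momentum K = x'y − xy',
one has K'(s) = κ(s)·z'(s). -/
theorem angular_momentum_deriv_eq_curvature_mul_z_deriv
    (x y z : ℝ → ℝ)
    (hx : ContDiff ℝ 2 x) (hy : ContDiff ℝ 2 y) (hz : ContDiff ℝ 2 z)
    (hsphere : ∀ s, x s ^ 2 + y s ^ 2 + z s ^ 2 = 1)
    (hunit : ∀ s, deriv x s ^ 2 + deriv y s ^ 2 + deriv z s ^ 2 = 1)
    (κ K : ℝ → ℝ)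
    -- κ(s) = det(ξ(s), ξ'(s), ξ''(s))
    (hκ : ∀ s, κ s =
      x s * (deriv y s * deriv (deriv z) s - deriv z s * deriv (deriv y) s)
      - y s * (deriv x s * deriv (deriv z) s - deriv z s * deriv (deriv x) s)
      + z s * (deriv x s * deriv (deriv y) s - deriv y s * deriv (deriv x) s))
    (hK : ∀ s, K s = deriv x s * y s - x s * deriv y s) :
    ∀ s, deriv K s = κ s * deriv z s := by
  obtain ⟨hx1, hx2⟩ := contDiff_two_diff x hx
  obtain ⟨hy1, hy2⟩ := contDiff_two_diff y hy
  obtain ⟨hz1, hz2⟩ := contDiff_two_diff z hz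
  intro s
  -- first derivative of the sphere relation
  have h1 : ∀ t, x t * deriv x t + y t * deriv y t + z t * deriv z t = 0 := by
    intro t
    have hd : HasDerivAt (fun u => x u ^ 2 + y u ^ 2 + z u ^ 2)
        (2 * x t * deriv x t + 2 * y t * deriv y t + 2 * z t * deriv z t) t := by
      have := (((hx1 t).hasDerivAt.fun_pow 2).fun_add ((hy1 t).hasDerivAt.fun_pow 2)).fun_add
        ((hz1 t).hasDerivAt.fun_pow 2)
      exact this.congr_deriv (by norm_num)
    have hfun : (fun u => x u ^ 2 + y u ^ 2 + z u ^ 2) = fun _ => (1 : ℝ) :=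
      funext hsphere
    rw [hfun] at hd
    have := hd.unique (hasDerivAt_const t 1)
    nlinarith [this]
  -- derivative of the unit-speed relation
  have hAP : deriv x s * deriv (deriv x) s + deriv y s * deriv (deriv y) s
      + deriv z s * deriv (deriv z) s = 0 := by
    have hd : HasDerivAt
        (fun u => deriv x u ^ 2 + deriv y u ^ 2 + deriv z u ^ 2)
        (2 * deriv x s * deriv (deriv x) s + 2 * deriv y s * deriv (deriv y) s
          + 2 * deriv z s * deriv (deriv z) s) s := by
      have := (((hx2 s).hasDerivAt.fun_pow 2).fun_add ((hy2 s).hasDerivAt.fun_pow 2)).fun_add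
        ((hz2 s).hasDerivAt.fun_pow 2)
      exact this.congr_deriv (by norm_num)
    have hfun : (fun u => deriv x u ^ 2 + deriv y u ^ 2 + deriv z u ^ 2)
        = fun _ => (1 : ℝ) := funext hunit
    rw [hfun] at hd
    have := hd.unique (hasDerivAt_const s 1)
    nlinarith [this]
  -- derivative of K
  have hKd : deriv K s = deriv (deriv x) s * y s - x s * deriv (deriv y) s := by
    have hd : HasDerivAt (fun u => deriv x u * y u - x u * deriv y u)
        (deriv (deriv x) s * y s + deriv x s * deriv y s
          - (deriv x s * deriv y s + x s * deriv (deriv y) s)) s :=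
      ((hx2 s).hasDerivAt.mul (hy1 s).hasDerivAt).sub
        ((hx1 s).hasDerivAt.mul (hy2 s).hasDerivAt)
    have hfun : K = fun u => deriv x u * y u - x u * deriv y u := funext hK
    rw [hfun, hd.deriv]
    ring
  rw [hKd, hκ s]
  have hS := hsphere s
  have hU := hunit s
  have h1s := h1 s
  set X := x s; set Y := y s; set Z := z s
  set A := deriv x s; set B := deriv y s; set C := deriv z s
  set P := deriv (deriv x) s; set Q := deriv (deriv y) s; set R := deriv (deriv z) s
  -- κ expression
  have hκe : (X * (B * R - C * Q) - Y * (A * R - C * P) + Z * (A * Q - B * P)) * C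
      = P * Y - X * Q := by
    linear_combination
      (-((X * Q - Y * P) * (A ^ 2 + B ^ 2 + C ^ 2))
        - (X * (B * R - C * Q) - Y * (A * R - C * P) + Z * (A * Q - B * P)) * C) * hS
      + (-((Y * P - X * Q) * (X * A + Y * B + Z * C))
        - (X * P + Y * Q + Z * R) * (X * B - Y * A)
        + (X * (B * R - C * Q) - Y * (A * R - C * P) + Z * (A * Q - B * P)) * Z) * h1s
      + (-(X * Q - Y * P)) * hU
      + ((X ^ 2 + Y ^ 2 + Z ^ 2) * (X * B - Y * A)) * hAP
  linarith [hκe]
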